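/- Let τ > 0 and let z : [0, 1] × ℝ → ℝ be continuously differentiable and satisfy the transport equation τ ∂_t z(ϱ, t) + ∂_ϱ z(ϱ, t) = 0 on [0,1] × ℝ, and let G : ℝ → ℝ be continuously differentiable. Define Υ(t) := ∫₀¹ e^{−2τϱ} G(z(ϱ, t)) dϱ. Then for every t ∈ ℝ, Υ'(t) = −2 Υ(t) − (1/τ) ( e^{−2τ} G(z(1, t)) − G(z(0, t)) ). -/

import Mathlib

open MeasureTheory intervalIntegral Real

/-- For `Υ(t) = ∫₀¹ e^{−2τϱ} G(z(ϱ,t)) dϱ` with `z` a `C¹` solution of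
`τ ∂_t z + ∂_ϱ z = 0` on `[0,1] × ℝ`,
`Υ'(t) = −2Υ(t) − (1/τ)(e^{−2τ} G(z(1,t)) − G(z(0,t)))`. -/
theorem stmt_12 (τ : ℝ) (hτ : 0 < τ)
    (z : ℝ → ℝ → ℝ) (hz : ContDiff ℝ 1 fun q : ℝ × ℝ => z q.1 q.2)
    (hpde : ∀ ϱ ∈ Set.Icc (0:ℝ) 1, ∀ t : ℝ,
      τ * deriv (fun t' => z ϱ t') t + deriv (fun ϱ' => z ϱ' t) ϱ = 0)
    (G : ℝ → ℝ) (hG : ContDiff ℝ 1 G)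
    (Υ : ℝ → ℝ)
    (hΥ : ∀ r : ℝ, Υ r = ∫ ϱ in (0:ℝ)..1, Real.exp (-2 * τ * ϱ) * G (z ϱ r))
    (t : ℝ) :
    deriv Υ t
      = -2 * Υ t - (1 / τ) * (Real.exp (-2 * τ) * G (z 1 t) - G (z 0 t)) := by
  set Z : ℝ × ℝ → ℝ := fun q => z q.1 q.2 with hZdef
  have hzd : Differentiable ℝ Z := hz.differentiable one_ne_zero
  -- partial derivatives as values of the Fréchet derivative
  have hD1 : ∀ ϱ t : ℝ, HasDerivAt (fun ϱ' => z ϱ' t) (fderiv ℝ Z (ϱ, t) (1, 0)) ϱ := by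
    intro ϱ t
    have hcurve : HasDerivAt (fun ϱ' : ℝ => ((ϱ' : ℝ), t)) ((1:ℝ), (0:ℝ)) ϱ :=
      (hasDerivAt_id ϱ).prodMk (hasDerivAt_const ϱ t)
    exact (hzd (ϱ, t)).hasFDerivAt.comp_hasDerivAt ϱ hcurve
  have hD2 : ∀ ϱ t : ℝ, HasDerivAt (fun t' => z ϱ t') (fderiv ℝ Z (ϱ, t) (0, 1)) t := by
    intro ϱ t
    have hcurve : HasDerivAt (fun t' : ℝ => ((ϱ : ℝ), t')) ((0:ℝ), (1:ℝ)) t :=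
      (hasDerivAt_const t ϱ).prodMk (hasDerivAt_id t)
    exact (hzd (ϱ, t)).hasFDerivAt.comp_hasDerivAt t hcurve
  -- characteristics: z ϱ t = z 0 (t - τ ϱ) for ϱ ∈ [0,1]
  have hchar : ∀ ϱ ∈ Set.Icc (0:ℝ) 1, ∀ t : ℝ, z ϱ t = z 0 (t - τ * ϱ) := by
    intro ϱ hϱ t
    set φ : ℝ → ℝ := fun s => z s (t - τ * ϱ + τ * s) with hφdef
    have key : ∀ s ∈ Set.uIcc (0:ℝ) ϱ, HasDerivAt φ 0 s := by
      intro s hs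
      rw [Set.uIcc_of_le hϱ.1] at hs
      have hs' : s ∈ Set.Icc (0:ℝ) 1 := ⟨hs.1, hs.2.trans hϱ.2⟩
      set u := t - τ * ϱ + τ * s with hu
      have hcurve : HasDerivAt (fun s' : ℝ => ((s' : ℝ), t - τ * ϱ + τ * s'))
          ((1:ℝ), (τ:ℝ)) s := by
        refine (hasDerivAt_id s).prodMk ?_
        simpa using ((hasDerivAt_id s).const_mul τ).const_add (t - τ * ϱ)
      have h := (hzd (s, u)).hasFDerivAt.comp_hasDerivAt s hcurve
      have hval : fderiv ℝ Z (s, u) (1, τ) = 0 := by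
        have hsplit : ((1:ℝ), (τ:ℝ)) = ((1:ℝ),(0:ℝ)) + τ • ((0:ℝ),(1:ℝ)) := by
          simp [Prod.ext_iff]
        rw [hsplit, (fderiv ℝ Z (s, u)).map_add, (fderiv ℝ Z (s, u)).map_smul]
        have hp := hpde s hs' u
        rw [(hD2 s u).deriv, (hD1 s u).deriv] at hp
        simp only [smul_eq_mul]
        linarith
      rw [hval] at h
      exact h
    have hint : IntervalIntegrable (fun _ : ℝ => (0:ℝ)) volume 0 ϱ :=
      intervalIntegrable_const
    have h0 := intervalIntegral.integral_eq_sub_of_hasDerivAt key hint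
    simp only [intervalIntegral.integral_zero] at h0
    have hφϱ : φ ϱ = z ϱ t := by simp [hφdef]
    have hφ0 : φ 0 = z 0 (t - τ * ϱ) := by simp [hφdef]
    rw [hφϱ, hφ0] at h0
    linarith
  -- auxiliary functions
  set g : ℝ → ℝ := fun u => G (z 0 u) with hgdef
  set F : ℝ → ℝ := fun u => Real.exp (2 * u) * g u with hFdef
  have hzc : Continuous fun u : ℝ => z 0 u := by
    have : Continuous Z := hz.continuous
    exact this.comp (continuous_const.prodMk continuous_id)
  have hFc : Continuous F := by
    apply Continuous.mul
    · exact Real.continuous_exp.comp (continuous_const.mul continuous_id)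
    · exact hG.continuous.comp hzc
  set H : ℝ → ℝ := fun x => ∫ u in (0:ℝ)..x, F u with hHdef
  have hHd : ∀ x : ℝ, HasDerivAt H (F x) x := fun x =>
    (hFc.integral_hasStrictDerivAt 0 x).hasDerivAt
  have hτ0 : τ ≠ 0 := ne_of_gt hτ
  -- closed form for Υ
  have hΥ' : ∀ r : ℝ, Υ r = (1/τ) * (Real.exp (-2*r) * (H r - H (r - τ))) := by
    intro r
    rw [hΥ r]
    have hcg : ∀ ϱ ∈ Set.uIcc (0:ℝ) 1,
        Real.exp (-2 * τ * ϱ) * G (z ϱ r) = Real.exp (-2*r) * F (-τ * ϱ + r) := by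
      intro ϱ hϱ
      rw [Set.uIcc_of_le (by norm_num : (0:ℝ) ≤ 1)] at hϱ
      rw [hchar ϱ hϱ r]
      simp only [hFdef, hgdef]
      rw [← mul_assoc, ← Real.exp_add]
      ring_nf
    rw [intervalIntegral.integral_congr hcg, intervalIntegral.integral_const_mul]
    rw [intervalIntegral.integral_comp_mul_add F (neg_ne_zero.mpr hτ0) r]
    have hadj : H (r - τ) + (∫ u in (r-τ)..r, F u) = H r :=
      intervalIntegral.integral_add_adjacent_intervals
        (hFc.intervalIntegrable _ _) (hFc.intervalIntegrable _ _)
    have h1 : (∫ u in (-τ * 0 + r)..(-τ * 1 + r), F u) = -(H r - H (r - τ)) := by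
      have : (-τ * 0 + r) = r := by ring
      rw [this]
      have : (-τ * 1 + r) = r - τ := by ring
      rw [this, intervalIntegral.integral_symm]
      rw [show (∫ u in (r-τ)..r, F u) = H r - H (r - τ) by linarith]
    rw [h1]
    simp only [smul_eq_mul]
    rw [inv_neg, one_div]
    ring
  have hfun : Υ = fun r => (1/τ) * (Real.exp (-2*r) * (H r - H (r - τ))) := funext hΥ'
  -- derivative computation
  have hexp : HasDerivAt (fun r : ℝ => Real.exp (-2*r)) (Real.exp (-2*t) * (-2)) t := by
    simpa using (((hasDerivAt_id t).const_mul (-2)).exp)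
  have hH1 : HasDerivAt H (F t) t := hHd t
  have hH2 : HasDerivAt (fun r : ℝ => H (r - τ)) (F (t - τ)) t := by
    exact (hHd (t - τ)).comp_sub_const t τ
  have hUd : HasDerivAt Υ
      ((1/τ) * ((Real.exp (-2*t) * (-2)) * (H t - H (t - τ)) +
        Real.exp (-2*t) * (F t - F (t - τ)))) t := by
    rw [hfun]
    exact ((hexp.mul (hH1.sub hH2)).const_mul (1/τ))
  have e1 : Real.exp (-2*t) * F t = G (z 0 t) := by
    simp only [hFdef, hgdef]
    rw [← mul_assoc, ← Real.exp_add, show (-2*t + 2*t : ℝ) = 0 by ring, Real.exp_zero, one_mul]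
  have e2 : Real.exp (-2*t) * F (t - τ) = Real.exp (-2*τ) * G (z 0 (t - τ)) := by
    simp only [hFdef, hgdef]
    rw [← mul_assoc, ← Real.exp_add, show (-2*t + 2*(t - τ) : ℝ) = -2*τ by ring]
  have hz1 : z 1 t = z 0 (t - τ) := by
    simpa using hchar 1 ⟨le_of_lt one_pos, le_refl 1⟩ t
  rw [hUd.deriv, hΥ' t, hz1]
  linear_combination (1/τ) * e1 - (1/τ) * e2
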